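/- Let X_1,...,X_n be (possibly dependent) Bernoulli random variables with Pr(X_i=1)=p_i, p̄ = (1/n)∑p_i > 1/2, d = n(p̄ − 1/2), and σ² = ∑Var(X_i) + 2∑_{i<j}Cov(X_i,X_j). Then the probability that ∑X_i > n/2 is at least d²/(σ² + d²). -/

import Mathlib

open MeasureTheory

lemma sum_sum_eq_diag_add_two_mul {n : ℕ} (f : Fin n → Fin n → ℝ)
    (hsymm : ∀ i j, f i j = f j i) :
    ∑ i, ∑ j, f i j = (∑ i, f i i) + 2 * ∑ i, ∑ j ∈ Finset.Ioi i, f i j := by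
  have hIoi : ∀ i : Fin n, Finset.Ioi i = Finset.univ.filter (i < ·) := by
    intro i; ext j; simp
  have tri : ∀ i j : Fin n, f i j =
      (if j < i then f i j else 0) + (if j = i then f i j else 0)
        + (if i < j then f i j else 0) := by
    intro i j
    rcases lt_trichotomy j i with h | h | h
    · simp [h, h.ne, not_lt.2 h.le]
    · simp [h, lt_irrefl]
    · simp [h, h.ne', not_lt.2 h.le]
  have h1 : ∑ i, ∑ j, f i j =
      (∑ i : Fin n, ∑ j : Fin n, if j < i then f i j else 0)
      + (∑ i : Fin n, ∑ j : Fin n, if j = i then f i j else 0)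
      + (∑ i : Fin n, ∑ j : Fin n, if i < j then f i j else 0) := by
    rw [← Finset.sum_add_distrib, ← Finset.sum_add_distrib]
    refine Finset.sum_congr rfl fun i _ => ?_
    rw [← Finset.sum_add_distrib, ← Finset.sum_add_distrib]
    exact Finset.sum_congr rfl fun j _ => tri i j
  have h2 : ∀ i : Fin n, (∑ j : Fin n, if j = i then f i j else 0) = f i i := by
    intro i; simp
  have h3 : ∀ i : Fin n, (∑ j : Fin n, if i < j then f i j else 0)
      = ∑ j ∈ Finset.Ioi i, f i j := by
    intro i; rw [hIoi i, Finset.sum_filter]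
  have h4 : (∑ i : Fin n, ∑ j : Fin n, if j < i then f i j else 0)
      = ∑ i : Fin n, ∑ j ∈ Finset.Ioi i, f i j := by
    rw [Finset.sum_comm]
    refine Finset.sum_congr rfl fun i _ => ?_
    rw [hIoi i, Finset.sum_filter]
    exact Finset.sum_congr rfl fun j _ => by rw [hsymm j i]
  rw [h1, h4]
  simp only [h2, h3]
  ring

set_option maxHeartbeats 1000000 in
theorem ladha_correlated_jury {Ω : Type*} [MeasurableSpace Ω]
    (μ : Measure Ω) [IsProbabilityMeasure μ]
    (n : ℕ) (hn : 0 < n) (X : Fin n → Ω → ℝ) (p : Fin n → ℝ)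
    (hmeas : ∀ i, Measurable (X i))
    (h01 : ∀ i ω, X i ω = 0 ∨ X i ω = 1)
    (hp : ∀ i, μ {ω | X i ω = 1} = ENNReal.ofReal (p i))
    (pbar d σ2 : ℝ)
    (hpbar : pbar = (∑ i, p i) / n)
    (hhalf : 1 / 2 < pbar)
    (hd : d = n * (pbar - 1 / 2))
    (hσ : σ2 = (∑ i, p i * (1 - p i)) +
      2 * ∑ i, ∑ j ∈ Finset.Ioi i, ((∫ ω, X i ω * X j ω ∂μ) - p i * p j)) :
    d ^ 2 / (σ2 + d ^ 2) ≤ (μ {ω | (n : ℝ) / 2 < ∑ i, X i ω}).toReal := by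
  classical
  have hn' : (0:ℝ) < n := by exact_mod_cast hn
  set S : Ω → ℝ := fun ω => ∑ i, X i ω with hSdef
  set A : Set Ω := {ω | (n : ℝ)/2 < S ω} with hAdef
  have hSmeas : Measurable S := Finset.measurable_sum _ fun i _ => hmeas i
  have hAmeas : MeasurableSet A := measurableSet_lt measurable_const hSmeas
  set I : Ω → ℝ := A.indicator (fun _ => (1:ℝ)) with hIdef
  -- integrability helper
  have hint : ∀ (f : Ω → ℝ) (C : ℝ), Measurable f → (∀ ω, |f ω| ≤ C) → Integrable f μ := by
    intro f C hf hb
    exact (integrable_const C).mono' hf.aestronglyMeasurable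
      (Filter.Eventually.of_forall fun ω => by simpa using hb ω)
  have hX0 : ∀ i ω, 0 ≤ X i ω := fun i ω => by rcases h01 i ω with h|h <;> simp [h]
  have hX1 : ∀ i ω, X i ω ≤ 1 := fun i ω => by rcases h01 i ω with h|h <;> simp [h]
  have hXb : ∀ i ω, |X i ω| ≤ 1 := fun i ω => abs_le.2 ⟨by linarith [hX0 i ω], hX1 i ω⟩
  have hintX : ∀ i, Integrable (X i) μ := fun i => hint _ 1 (hmeas i) (hXb i)
  have hintXX : ∀ i j, Integrable (fun ω => X i ω * X j ω) μ := fun i j =>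
    hint _ 1 ((hmeas i).mul (hmeas j)) (fun ω => by
      rw [abs_mul]
      exact mul_le_one₀ (hXb i ω) (abs_nonneg _) (hXb j ω))
  set q : Fin n → ℝ := fun i => max (p i) 0 with hqdef
  have hq : ∀ i, ∫ ω, X i ω ∂μ = q i := by
    intro i
    have hset : MeasurableSet {ω | X i ω = 1} := hmeas i (measurableSet_singleton 1)
    have hfun : X i = Set.indicator {ω | X i ω = 1} (fun _ => (1:ℝ)) := by
      funext ω
      rcases h01 i ω with h|h
      · simp [Set.indicator_apply, h]
      · simp [Set.indicator_apply, h]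
    rw [hfun, integral_indicator_const (1:ℝ) hset, measureReal_def, hp i, smul_eq_mul, mul_one,
      ENNReal.toReal_ofReal']
  have hm_diag : ∀ i, (∫ ω, X i ω * X i ω ∂μ) = q i := by
    intro i
    rw [← hq i]
    refine integral_congr_ae (Filter.Eventually.of_forall fun ω => ?_)
    rcases h01 i ω with h|h <;> simp [h]
  have hpq : ∀ i, p i ≤ q i := fun i => le_max_left _ _
  set a := ∑ i, p i with hadef
  set b := ∑ i, q i with hbdef
  have hab : a ≤ b := Finset.sum_le_sum fun i _ => hpq i
  set W := ∑ i, ∑ j ∈ Finset.Ioi i, (∫ ω, X i ω * X j ω ∂μ) with hWdef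
  set P2 := ∑ i, ∑ j ∈ Finset.Ioi i, p i * p j with hP2def
  have hd' : d = a - n/2 := by rw [hd, hpbar]; field_simp
  have hdpos : 0 < d := by rw [hd]; exact mul_pos hn' (by linarith)
  have hσ' : σ2 = (a - ∑ i, p i ^ 2) + 2 * (W - P2) := by
    rw [hσ]
    have e1 : ∑ i, p i * (1 - p i) = a - ∑ i, p i ^ 2 := by
      rw [hadef, ← Finset.sum_sub_distrib]
      exact Finset.sum_congr rfl fun i _ => by ring
    have e2 : ∑ i, ∑ j ∈ Finset.Ioi i, ((∫ ω, X i ω * X j ω ∂μ) - p i * p j) = W - P2 := by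
      rw [hWdef, hP2def, ← Finset.sum_sub_distrib]
      exact Finset.sum_congr rfl fun i _ => by rw [Finset.sum_sub_distrib]
    rw [e1, e2]
  have hsq_a : a ^ 2 = (∑ i, p i ^ 2) + 2 * P2 := by
    have h := sum_sum_eq_diag_add_two_mul (fun i j => p i * p j) (fun i j => mul_comm _ _)
    rw [hadef, pow_two, Finset.sum_mul_sum, h]
    congr 1
    exact Finset.sum_congr rfl fun i _ => (pow_two (p i)).symm
  have hintS : Integrable S μ := integrable_finset_sum _ fun i _ => hintX i
  have hiS : ∫ ω, S ω ∂μ = b := by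
    rw [hSdef]
    rw [integral_finset_sum _ fun i _ => hintX i]
    exact Finset.sum_congr rfl fun i _ => hq i
  have hSnn : ∀ ω, 0 ≤ S ω := fun ω => Finset.sum_nonneg fun i _ => hX0 i ω
  have hSle : ∀ ω, S ω ≤ n := fun ω => by
    calc S ω ≤ ∑ _i : Fin n, (1:ℝ) := Finset.sum_le_sum fun i _ => hX1 i ω
    _ = n := by simp
  have hintSS : Integrable (fun ω => S ω * S ω) μ :=
    hint _ ((n:ℝ)*n) (hSmeas.mul hSmeas) (fun ω => by
      rw [abs_mul]
      have := abs_le.2 ⟨by linarith [hSnn ω], hSle ω⟩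
      exact mul_le_mul this this (abs_nonneg _) (by positivity))
  have hiSS : ∫ ω, S ω * S ω ∂μ = b + 2 * W := by
    have hpt : ∀ ω, S ω * S ω = ∑ i, ∑ j, X i ω * X j ω := fun ω =>
      Finset.sum_mul_sum _ _ _ _
    calc ∫ ω, S ω * S ω ∂μ = ∫ ω, ∑ i, ∑ j, X i ω * X j ω ∂μ := by
          exact integral_congr_ae (Filter.Eventually.of_forall hpt)
      _ = ∑ i, ∑ j, ∫ ω, X i ω * X j ω ∂μ := by
          rw [integral_finset_sum _ fun i _ => integrable_finset_sum _ fun j _ => hintXX i j]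
          exact Finset.sum_congr rfl fun i _ =>
            integral_finset_sum _ fun j _ => hintXX i j
      _ = (∑ i, ∫ ω, X i ω * X i ω ∂μ) + 2 * W :=
          sum_sum_eq_diag_add_two_mul _ (fun i j =>
            integral_congr_ae (Filter.Eventually.of_forall fun ω => mul_comm _ _))
      _ = b + 2 * W := by
          rw [hbdef]
          congr 1
          exact Finset.sum_congr rfl fun i _ => hm_diag i
  set T : Ω → ℝ := fun ω => S ω - n/2 with hTdef
  have hTmeas : Measurable T := hSmeas.sub measurable_const
  have hTb : ∀ ω, |T ω| ≤ n := fun ω => abs_le.2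
    ⟨by have := hSnn ω; simp only [hTdef]; linarith, by have := hSle ω; simp only [hTdef]; linarith⟩
  have hintT : Integrable T μ := hint _ _ hTmeas hTb
  have hintTT : Integrable (fun ω => T ω * T ω) μ :=
    hint _ ((n:ℝ)*n) (hTmeas.mul hTmeas) (fun ω => by
      rw [abs_mul]; exact mul_le_mul (hTb ω) (hTb ω) (abs_nonneg _) (by positivity))
  set M := ∫ ω, T ω * T ω ∂μ with hMdef
  have hM : M = (b + 2*W) - n * b + (n:ℝ)^2/4 := by
    have hpt : (fun ω => T ω * T ω) =
        fun ω => (S ω * S ω - n * S ω) + (n:ℝ)^2/4 := by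
      funext ω; simp only [hTdef]; ring
    have i1 : Integrable (fun ω => S ω * S ω - (n:ℝ) * S ω) μ :=
      hintSS.sub (hintS.const_mul _)
    rw [hMdef, hpt, integral_add i1 (integrable_const _),
      integral_sub hintSS (hintS.const_mul _), integral_const_mul, hiSS, hiS, integral_const]
    simp [measure_univ]
  have hiT : ∫ ω, T ω ∂μ = b - n/2 := by
    rw [hTdef, integral_sub hintS (integrable_const _), hiS, integral_const]
    simp [measure_univ]
  have hImeas : Measurable I := measurable_const.indicator hAmeas
  have hI01 : ∀ ω, I ω = 0 ∨ I ω = 1 := fun ω => by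
    by_cases h : ω ∈ A <;> simp [hIdef, Set.indicator_apply, h]
  have hIb : ∀ ω, |I ω| ≤ 1 := fun ω => by rcases hI01 ω with h|h <;> simp [h]
  have hintTI : Integrable (fun ω => T ω * I ω) μ :=
    hint _ ((n:ℝ)*1) (hTmeas.mul hImeas) (fun ω => by
      rw [abs_mul]; exact mul_le_mul (hTb ω) (hIb ω) (abs_nonneg _) (by positivity))
  have hiI : ∫ ω, I ω ∂μ = (μ A).toReal := by
    rw [hIdef, integral_indicator_const (1:ℝ) hAmeas, smul_eq_mul, mul_one, measureReal_def]
  have hTle : ∀ ω, T ω ≤ T ω * I ω := fun ω => by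
    by_cases h : ω ∈ A
    · simp [hIdef, Set.indicator_of_mem h]
    · have hS' : S ω ≤ n/2 := not_lt.1 (by simpa [hAdef] using h)
      simp only [hIdef, Set.indicator_of_notMem h, mul_zero, hTdef]
      linarith
  have hTleInt : ∫ ω, T ω ∂μ ≤ ∫ ω, T ω * I ω ∂μ :=
    integral_mono hintT hintTI hTle
  set t := ∫ ω, T ω * I ω ∂μ with htdef
  set c2 := (μ A).toReal with hc2def
  have quad : ∀ x : ℝ, 0 ≤ M * (x * x) + (-(2 * t)) * x + c2 := by
    intro x
    have hptI : (fun ω => (x * T ω - I ω) * (x * T ω - I ω)) =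
        fun ω => x * x * (T ω * T ω) - (2 * x) * (T ω * I ω) + I ω := by
      funext ω
      have h2 : I ω * I ω = I ω := by rcases hI01 ω with h|h <;> simp [h]
      linear_combination h2
    have hnn : 0 ≤ ∫ ω, (x * T ω - I ω) * (x * T ω - I ω) ∂μ :=
      integral_nonneg fun ω => mul_self_nonneg _
    have hval : ∫ ω, (x * T ω - I ω) * (x * T ω - I ω) ∂μ
        = M * (x * x) - (2 * x) * t + c2 := by
      have i2 : Integrable (fun ω => x * x * (T ω * T ω) - 2 * x * (T ω * I ω)) μ :=
        (hintTT.const_mul _).sub (hintTI.const_mul _)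
      rw [hptI, integral_add i2 (hint _ 1 hImeas hIb),
        integral_sub (hintTT.const_mul _) (hintTI.const_mul _),
        integral_const_mul, integral_const_mul, hiI, ← hMdef, ← htdef]
      ring
    rw [hval] at hnn
    nlinarith [hnn]
  have hdisc := discrim_le_zero quad
  have hCS : t ^ 2 ≤ M * c2 := by
    have hde : discrim M (-(2 * t)) c2 = 4 * (t^2 - M * c2) := by
      rw [discrim]; ring
    rw [hde] at hdisc
    linarith
  have hdb : d ≤ b - n/2 := by rw [hd']; linarith
  have ht' : b - n/2 ≤ t := hiT ▸ hTleInt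
  have htpos : 0 < t := lt_of_lt_of_le (lt_of_lt_of_le hdpos hdb) ht'
  have hc2le : c2 ≤ 1 := by
    rw [hc2def]
    simpa using ENNReal.toReal_mono ENNReal.one_ne_top prob_le_one
  have hc2nn : 0 ≤ c2 := ENNReal.toReal_nonneg
  clear_value S A I q a b W P2 T M t c2
  have hMpos : 0 < M := by
    have h0 : 0 < t ^ 2 := pow_pos htpos 2
    by_contra hc
    push_neg at hc
    have h1 : M * c2 ≤ 0 := mul_nonpos_iff.2 (Or.inr ⟨hc, hc2nn⟩)
    linarith [hCS]
  have hMle : M ≤ σ2 + d^2 := by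
    have h1 : σ2 + d^2 = (a + 2*W) - n * a + (n:ℝ)^2/4 := by
      rw [hσ', hd']
      linear_combination hsq_a
    have hn1 : (1:ℝ) ≤ n := by exact_mod_cast hn
    rw [h1, hM]
    have key : 0 ≤ ((n:ℝ) - 1) * (b - a) := mul_nonneg (by linarith) (by linarith)
    linarith [key]
  have h1 : d^2 ≤ t^2 := pow_le_pow_left₀ (le_of_lt hdpos) (le_trans hdb ht') 2
  have h2 : t^2 / M ≤ c2 := by rw [div_le_iff₀ hMpos]; linarith
  calc d^2 / (σ2 + d^2) ≤ d^2 / M := by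
        apply div_le_div_of_nonneg_left (sq_nonneg d) hMpos hMle
    _ ≤ t^2 / M := by gcongr
    _ ≤ c2 := h2
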